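/- Let f(y) = ½y² (the case ε = +1, i.e. the manifold S_+). For P ∈ ℝ³ and v ∈ ℝ³, let γ_{P,v} : ℝ → ℝ³ be the unique solution of the geodesic system x'' = 0, x̃'' = 2 y x' y', y'' = -y (x')² with γ_{P,v}(0) = P and γ_{P,v}'(0) = v (this solution is defined on all of ℝ). Then for every P ∈ ℝ³ the exponential map E_P : ℝ³ → ℝ³ given by E_P(v) := γ_{P,v}(1) is not surjective. -/

import Mathlib

open Real

private lemma const_of_deriv_zero (f : ℝ → ℝ) (h : ∀ t, HasDerivAt f 0 t) (a b : ℝ) :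
    f a = f b :=
  is_const_of_deriv_eq_zero (fun t => (h t).differentiableAt) (fun t => (h t).deriv) a b

/-- For the manifold `S_+` (i.e. `f(y) = ½y²`), the exponential map at every point is
not surjective.  Here `(X P v, XT P v, Y P v) : ℝ → ℝ³` is the unique global solution
of the geodesic system `x'' = 0`, `x̃'' = 2 y x' y'`, `y'' = -y (x')²` with initial
position `P` and initial velocity `v` at `t = 0`, and the exponential map is
`E P v = (X P v 1, XT P v 1, Y P v 1)`. -/
theorem S_plus_exponential_map_not_surjective
    (X XT Y X' XT' Y' : (ℝ × ℝ × ℝ) → (ℝ × ℝ × ℝ) → ℝ → ℝ)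
    (hX : ∀ P v t, HasDerivAt (X P v) (X' P v t) t)
    (hX' : ∀ P v t, HasDerivAt (X' P v) 0 t)
    (hXT : ∀ P v t, HasDerivAt (XT P v) (XT' P v t) t)
    (hXT' : ∀ P v t, HasDerivAt (XT' P v) (2 * Y P v t * X' P v t * Y' P v t) t)
    (hY : ∀ P v t, HasDerivAt (Y P v) (Y' P v t) t)
    (hY' : ∀ P v t, HasDerivAt (Y' P v) (-(Y P v t * (X' P v t) ^ 2)) t)
    (hinit : ∀ P v : ℝ × ℝ × ℝ,
      X P v 0 = P.1 ∧ XT P v 0 = P.2.1 ∧ Y P v 0 = P.2.2 ∧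
      X' P v 0 = v.1 ∧ XT' P v 0 = v.2.1 ∧ Y' P v 0 = v.2.2)
    (E : (ℝ × ℝ × ℝ) → (ℝ × ℝ × ℝ) → (ℝ × ℝ × ℝ))
    (hE : ∀ P v, E P v = (X P v 1, XT P v 1, Y P v 1)) :
    ∀ P, ¬ Function.Surjective (E P) := by
  intro P hsurj
  obtain ⟨v, hv⟩ := hsurj (P.1 + π, P.2.1, 1 - P.2.2)
  rw [hE] at hv
  obtain ⟨hX0, hXT0, hY0, hX'0, hXT'0, hY'0⟩ := hinit P v
  have hv1 : X P v 1 = P.1 + π := congrArg Prod.fst hv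
  have hv3 : Y P v 1 = 1 - P.2.2 := congrArg (fun p => p.2.2) hv
  -- X' is constant equal to v.1
  have hXc : ∀ t, X' P v t = v.1 := fun t => by
    rw [const_of_deriv_zero (X' P v) (hX' P v) t 0, hX'0]
  -- X is affine : X t = P.1 + v1 * t, so v.1 = π
  have haff : X P v 1 - v.1 * 1 = X P v 0 - v.1 * 0 := by
    apply const_of_deriv_zero (fun t => X P v t - v.1 * t) (fun t => ?_)
    have h := (hX P v t).sub ((hasDerivAt_id t).const_mul v.1)
    rw [hXc t, mul_one, sub_self] at h
    exact h
  have hv1π : v.1 = π := by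
    have : X P v 1 = P.1 + v.1 := by rw [hX0] at haff; linarith
    rw [hv1] at this; linarith
  set y0 := P.2.2 with hy0
  set c := v.2.2 with hc
  -- comparison solution
  set s : ℝ → ℝ := fun t => y0 * Real.cos (π * t) + (c / π) * Real.sin (π * t) with hs_def
  set s' : ℝ → ℝ := fun t => -(y0 * π) * Real.sin (π * t) + c * Real.cos (π * t) with hs'_def
  have hπt : ∀ t : ℝ, HasDerivAt (fun t : ℝ => π * t) π t := fun t => by
    simpa using (hasDerivAt_id t).const_mul π
  have hs : ∀ t, HasDerivAt s (s' t) t := fun t => by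
    have h1 := ((Real.hasDerivAt_cos (π * t)).comp t (hπt t)).const_mul y0
    have h2 := ((Real.hasDerivAt_sin (π * t)).comp t (hπt t)).const_mul (c / π)
    have hπ : (π : ℝ) ≠ 0 := Real.pi_ne_zero
    have := h1.add h2
    refine this.congr_deriv ?_
    simp only [hs'_def]
    field_simp
  have hs' : ∀ t, HasDerivAt s' (-(π ^ 2 * s t)) t := fun t => by
    have h1 := ((Real.hasDerivAt_sin (π * t)).comp t (hπt t)).const_mul (-(y0 * π))
    have h2 := ((Real.hasDerivAt_cos (π * t)).comp t (hπt t)).const_mul c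
    have := h1.add h2
    refine this.congr_deriv ?_
    simp only [hs_def]
    field_simp
    ring
  -- energy of the difference
  set Eg : ℝ → ℝ := fun t => (Y' P v t - s' t) ^ 2 + π ^ 2 * (Y P v t - s t) ^ 2 with hEg_def
  have hEgc : Eg 1 = Eg 0 := by
    apply const_of_deriv_zero Eg (fun t => ?_)
    have hd1 := ((hY' P v t).sub (hs' t)).pow 2
    have hd2 := (((hY P v t).sub (hs t)).pow 2).const_mul (π ^ 2)
    have h := hd1.add hd2
    have key : (2 : ℕ) * (Y' P v t - s' t) ^ (2 - 1) *
          (-(Y P v t * X' P v t ^ 2) - -(π ^ 2 * s t)) +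
        π ^ 2 * ((2 : ℕ) * (Y P v t - s t) ^ (2 - 1) * (Y' P v t - s' t)) = 0 := by
      rw [hXc t, hv1π]
      push_cast
      ring
    simp only [Pi.sub_apply] at h
    rw [key] at h
    exact h
  have hEg0 : Eg 0 = 0 := by
    have hsv0 : s 0 = y0 := by simp [hs_def]
    have hs'v0 : s' 0 = c := by simp [hs'_def]
    simp [hEg_def, hsv0, hs'v0, hY0, hY'0]
  have hsq : (Y P v 1 - s 1) ^ 2 = 0 := by
    have h1 : Eg 1 = 0 := hEgc.trans hEg0
    simp only [hEg_def] at h1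
    have hπpos : (0:ℝ) < π ^ 2 := by positivity
    nlinarith [sq_nonneg (Y' P v 1 - s' 1), sq_nonneg (Y P v 1 - s 1)]
  have hY1 : Y P v 1 = s 1 := by
    have := pow_eq_zero_iff (n := 2) (by norm_num) |>.mp hsq
    linarith
  have hs1 : s 1 = -y0 := by
    simp [hs_def, Real.cos_pi, Real.sin_pi]
  rw [hY1, hs1] at hv3
  linarith
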